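/- For each 1 ≤ m ≤ n, the vector v_m ∈ ℝ^{n+2} with components v_m(0) = 1, v_m(j) = λ_m·Ũ_{j−1}^{(m)}/√q − Ũ_{j−2}^{(m)}/√p for 1 ≤ j ≤ n, and v_m(n+1) = √q·(λ_m·Ũ_n^{(m)}/√q − Ũ_{n−1}^{(m)}/√p) satisfies J v_m = λ_m v_m; i.e., v_m is an eigenvector of J for the eigenvalue λ_m = 2√(pq)·cos(mπ/(n+1)). -/

import Mathlib

open Filter Finset

/-- The `(n+2) × (n+2)` Jacobi matrix of the reflected random walk on the path:
zero diagonal, `J(0,1) = √q`, `J(i,i+1) = √(pq)` for `1 ≤ i ≤ n-1`, `J(n,n+1) = √p`,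
and symmetric. -/
noncomputable def jacobiM (p q : ℝ) (n : ℕ) : Matrix (Fin (n + 2)) (Fin (n + 2)) ℝ :=
  fun k l =>
    if k.1 + 1 = l.1 then
      (if k.1 = 0 then Real.sqrt q else if k.1 = n then Real.sqrt p else Real.sqrt (p * q))
    else if l.1 + 1 = k.1 then
      (if l.1 = 0 then Real.sqrt q else if l.1 = n then Real.sqrt p else Real.sqrt (p * q))
    else 0

/-- `θ_m = mπ/(n+1)`. -/
noncomputable def thetaAngle (n m : ℕ) : ℝ := m * Real.pi / (n + 1)

/-- `λ_m = 2√(pq)·cos θ_m`. -/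
noncomputable def lamEig (p q : ℝ) (n m : ℕ) : ℝ :=
  2 * Real.sqrt (p * q) * Real.cos (thetaAngle n m)

/-- `Ũ_k^{(m)} = sin((k+1)θ_m)/sin θ_m` for integers `k ≥ -1`
(so `Ũ_{-1}^{(m)} = 0` and `Ũ_0^{(m)} = 1`). -/
noncomputable def Ubar (n m : ℕ) (k : ℤ) : ℝ :=
  Real.sin ((k + 1) * thetaAngle n m) / Real.sin (thetaAngle n m)

/-- The vector `v_m` with `v_m(0) = 1`,
`v_m(j) = λ_m·Ũ_{j-1}^{(m)}/√q - Ũ_{j-2}^{(m)}/√p` for `1 ≤ j ≤ n`, and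
`v_m(n+1) = √q·(λ_m·Ũ_n^{(m)}/√q - Ũ_{n-1}^{(m)}/√p)`. -/
noncomputable def vVec (p q : ℝ) (n m : ℕ) : Fin (n + 2) → ℝ :=
  fun j =>
    if j.1 = 0 then 1
    else if j.1 = n + 1 then
      Real.sqrt q *
        (lamEig p q n m * Ubar n m (n : ℤ) / Real.sqrt q - Ubar n m ((n : ℤ) - 1) / Real.sqrt p)
    else
      lamEig p q n m * Ubar n m ((j.1 : ℤ) - 1) / Real.sqrt q
        - Ubar n m ((j.1 : ℤ) - 2) / Real.sqrt p

noncomputable def gFun (p q : ℝ) (n m : ℕ) (j : ℤ) : ℝ :=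
  lamEig p q n m * Ubar n m (j - 1) / Real.sqrt q - Ubar n m (j - 2) / Real.sqrt p

lemma ubar_rec (n m : ℕ) (j : ℤ) :
    Ubar n m (j + 1) + Ubar n m (j - 1)
      = 2 * Real.cos (thetaAngle n m) * Ubar n m j := by
  unfold Ubar
  push_cast
  rw [show ((j:ℝ) + 1 + 1) * thetaAngle n m
        = ((j:ℝ)+1) * thetaAngle n m + thetaAngle n m by ring,
      show ((j:ℝ) - 1 + 1) * thetaAngle n m
        = ((j:ℝ)+1) * thetaAngle n m - thetaAngle n m by ring,
      Real.sin_add, Real.sin_sub]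
  ring

lemma ubar_top (n m : ℕ) : Ubar n m (n : ℤ) = 0 := by
  have h : ((n:ℝ)+1) ≠ 0 := by positivity
  unfold Ubar thetaAngle
  rw [show (((n:ℤ):ℝ) + 1) * ((m:ℝ) * Real.pi / ((n:ℝ)+1)) = (m:ℝ) * Real.pi by
    push_cast; field_simp]
  rw [Real.sin_nat_mul_pi, zero_div]

lemma ubar_zero (n m : ℕ) (h : Real.sin (thetaAngle n m) ≠ 0) : Ubar n m 0 = 1 := by
  unfold Ubar
  norm_num [div_self h]

lemma ubar_neg_one (n m : ℕ) : Ubar n m (-1) = 0 := by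
  unfold Ubar
  norm_num

lemma ubar_neg_two (n m : ℕ) (h : Real.sin (thetaAngle n m) ≠ 0) : Ubar n m (-2) = -1 := by
  unfold Ubar
  norm_num [Real.sin_neg, neg_div, div_self h]

lemma g_rec (p q : ℝ) (n m : ℕ) (j : ℤ) :
    Real.sqrt (p*q) * (gFun p q n m (j-1) + gFun p q n m (j+1))
      = lamEig p q n m * gFun p q n m j := by
  have h1 := ubar_rec n m (j-1)
  have h2 := ubar_rec n m (j-2)
  rw [show j-1+1 = j from by ring, show j-1-1 = j-2 from by ring] at h1
  rw [show j-2+1 = j-1 from by ring, show j-2-1 = j-3 from by ring] at h2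
  have e1 : Ubar n m j = 2 * Real.cos (thetaAngle n m) * Ubar n m (j-1) - Ubar n m (j-2) := by
    linarith
  have e2 : Ubar n m (j-3) = 2 * Real.cos (thetaAngle n m) * Ubar n m (j-2) - Ubar n m (j-1) := by
    linarith
  unfold gFun lamEig
  rw [show j+1-1 = j from by ring, show j+1-2 = j-1 from by ring,
      show j-1-1 = j-2 from by ring, show j-1-2 = j-3 from by ring, e1, e2]
  ring

/-- **Lemma.** For each `1 ≤ m ≤ n`, the vector `v_m` is an eigenvector of the Jacobi
matrix `J` for the eigenvalue `λ_m = 2√(pq)·cos(mπ/(n+1))`: `J v_m = λ_m v_m`. -/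
theorem jacobiM_mulVec_vVec (n : ℕ) (hn : 1 ≤ n)
    (p q : ℝ) (hp0 : 0 < p) (hp1 : p < 1) (hq0 : 0 < q) (hq1 : q < 1) (hpq : p + q = 1)
    (m : ℕ) (hm1 : 1 ≤ m) (hmn : m ≤ n) :
    (jacobiM p q n).mulVec (vVec p q n m) = lamEig p q n m • vVec p q n m := by
  have hθpos : 0 < thetaAngle n m := by
    unfold thetaAngle
    have hm : (0:ℝ) < m := by exact_mod_cast hm1
    have := Real.pi_pos
    positivity
  have hθlt : thetaAngle n m < Real.pi := by
    unfold thetaAngle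
    rw [div_lt_iff₀ (by positivity)]
    have hm : (m:ℝ) < (n:ℝ)+1 := by exact_mod_cast Nat.lt_succ_of_le hmn
    nlinarith [Real.pi_pos]
  have hs : Real.sin (thetaAngle n m) ≠ 0 :=
    ne_of_gt (Real.sin_pos_of_pos_of_lt_pi hθpos hθlt)
  have hsp : Real.sqrt p ≠ 0 := by positivity
  have hsq : Real.sqrt q ≠ 0 := by positivity
  have hr : Real.sqrt (p*q) = Real.sqrt p * Real.sqrt q := Real.sqrt_mul hp0.le q
  have hp2 : Real.sqrt p ^ 2 = p := Real.sq_sqrt hp0.le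
  have hq2 : Real.sqrt q ^ 2 = q := Real.sq_sqrt hq0.le
  have hxy : Real.sqrt p ^ 2 + Real.sqrt q ^ 2 = 1 := by rw [hp2, hq2]; exact hpq
  funext k
  obtain ⟨k, hk⟩ := k
  show ∑ l, jacobiM p q n ⟨k, hk⟩ l * vVec p q n m l
      = lamEig p q n m * vVec p q n m ⟨k, hk⟩
  rcases Nat.eq_zero_or_pos k with hk0 | hk1
  · -- row 0
    subst hk0
    rw [Finset.sum_eq_single_of_mem (⟨1, by omega⟩ : Fin (n+2)) (Finset.mem_univ _)
      (by
        intro b _ hb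
        have hb1 : b.1 ≠ 1 := by
          intro h; exact hb (Fin.ext h)
        simp only [jacobiM]
        rw [if_neg (by omega), if_neg (by omega), zero_mul])]
    have hn1 : (1:ℕ) ≠ n + 1 := by omega
    have hv1 : vVec p q n m ⟨1, by omega⟩
        = lamEig p q n m * Ubar n m 0 / Real.sqrt q - Ubar n m (-1) / Real.sqrt p := by
      simp [vVec, hn1]
      intro h; exact absurd h (by omega)
    have hJ : jacobiM p q n ⟨0, by omega⟩ (⟨1, by omega⟩ : Fin (n+2)) = Real.sqrt q := by
      simp [jacobiM]
    have hv0 : vVec p q n m ⟨0, hk⟩ = 1 := by simp [vVec]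
    rw [hJ, hv1, hv0, ubar_zero n m hs, ubar_neg_one]
    field_simp
    ring
  · rcases Nat.lt_or_ge k (n+1) with hklt | hktop
    · -- middle rows: 1 ≤ k ≤ n
      set a : Fin (n+2) := ⟨k-1, by omega⟩ with ha
      set b : Fin (n+2) := ⟨k+1, by omega⟩ with hb
      have hab : a ≠ b := by
        simp only [ne_eq, ha, hb, Fin.mk.injEq]
        omega
      have hsum : ∑ l, jacobiM p q n ⟨k, hk⟩ l * vVec p q n m l
          = jacobiM p q n ⟨k, hk⟩ a * vVec p q n m a
            + jacobiM p q n ⟨k, hk⟩ b * vVec p q n m b := by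
        rw [← Finset.sum_pair (f := fun l => jacobiM p q n ⟨k, hk⟩ l * vVec p q n m l) hab]
        refine (Finset.sum_subset (Finset.subset_univ _) ?_).symm
        intro x _ hx
        simp only [Finset.mem_insert, Finset.mem_singleton, ha, hb] at hx
        push_neg at hx
        have hx1 : x.1 ≠ k-1 := by
          intro h; exact hx.1 (Fin.ext h)
        have hx2 : x.1 ≠ k+1 := by
          intro h; exact hx.2 (Fin.ext h)
        simp only [jacobiM]
        rw [if_neg (by omega), if_neg (by omega), zero_mul]
      rw [hsum]
      have hterm_a : jacobiM p q n ⟨k, hk⟩ a * vVec p q n m a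
          = Real.sqrt (p*q) * gFun p q n m ((k:ℤ) - 1) := by
        rcases Nat.eq_or_lt_of_le hk1 with h1 | h2
        · -- k = 1, a = 0
          have hk1' : k = 1 := h1.symm
          subst hk1'
          have hJ : jacobiM p q n ⟨1, hk⟩ a = Real.sqrt q := by
            have f1 : ¬ ((1:ℕ) + 1 = 1 - 1) := by omega
            simp [jacobiM, ha, f1]
          have hva : vVec p q n m a = 1 := by
            simp [vVec, ha]
          rw [hJ, hva]
          unfold gFun
          rw [show ((1:ℕ):ℤ) - 1 = 0 from by norm_num,
              show (0:ℤ) - 1 = -1 from by norm_num,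
              show (0:ℤ) - 2 = -2 from by norm_num,
              ubar_neg_one, ubar_neg_two n m hs, hr]
          field_simp
          ring
        · -- 2 ≤ k
          have hJ : jacobiM p q n ⟨k, hk⟩ a = Real.sqrt (p*q) := by
            have f1 : ¬ (k + 1 = k - 1) := by omega
            have f2 : k - 1 + 1 = k := by omega
            have f3 : k - 1 ≠ 0 := by omega
            have f4 : k - 1 ≠ n := by omega
            simp [jacobiM, ha, f1, f2, f3, f4]
          have hva : vVec p q n m a = gFun p q n m ((k:ℤ) - 1) := by
            have c1 : k - 1 ≠ 0 := by omega
            have c2 : k - 1 ≠ n + 1 := by omega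
            have c3 : ((k - 1 : ℕ) : ℤ) = (k:ℤ) - 1 := by omega
            simp only [vVec, ha]
            rw [if_neg c1, if_neg c2, c3]
            unfold gFun
            rfl
          rw [hJ, hva]
      have hterm_b : jacobiM p q n ⟨k, hk⟩ b * vVec p q n m b
          = Real.sqrt (p*q) * gFun p q n m ((k:ℤ) + 1) := by
        rcases Nat.eq_or_lt_of_le (by omega : k ≤ n) with h1 | h2
        · -- k = n, b = n+1
          have hJ : jacobiM p q n ⟨k, hk⟩ b = Real.sqrt p := by
            have f3 : k ≠ 0 := by omega
            have f4 : n ≠ 0 := by omega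
            simp [jacobiM, hb, f3, f4, h1]
          have hvb : vVec p q n m b = Real.sqrt q * gFun p q n m ((n:ℤ) + 1) := by
            have c1 : k + 1 ≠ 0 := by omega
            have c2 : k + 1 = n + 1 := by omega
            simp only [vVec, hb]
            rw [if_neg c1, if_pos c2]
            unfold gFun
            rw [show (n:ℤ) + 1 - 1 = (n:ℤ) from by ring,
                show (n:ℤ) + 1 - 2 = (n:ℤ) - 1 from by ring]
          rw [show ((k:ℤ) + 1) = (n:ℤ) + 1 from by omega, hJ, hvb, hr]
          ring
        · -- k < n
          have hJ : jacobiM p q n ⟨k, hk⟩ b = Real.sqrt (p*q) := by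
            have f3 : k ≠ 0 := by omega
            have f4 : k ≠ n := by omega
            simp [jacobiM, hb, f3, f4]
          have hvb : vVec p q n m b = gFun p q n m ((k:ℤ) + 1) := by
            have c1 : k + 1 ≠ 0 := by omega
            have c2 : k + 1 ≠ n + 1 := by omega
            simp only [vVec, hb]
            rw [if_neg c1, if_neg c2]
            unfold gFun
            rw [show ((k + 1 : ℕ) : ℤ) = (k:ℤ) + 1 from by omega]
          rw [hJ, hvb]
      rw [hterm_a, hterm_b, ← mul_add, g_rec]
      have hvk : vVec p q n m ⟨k, hk⟩ = gFun p q n m (k:ℤ) := by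
        have c1 : k ≠ 0 := by omega
        have c2 : k ≠ n + 1 := by omega
        simp only [vVec]
        rw [if_neg c1, if_neg c2]
        unfold gFun
        rfl
      rw [hvk]
    · -- row n+1
      have hkeq : k = n + 1 := by omega
      subst hkeq
      rw [Finset.sum_eq_single_of_mem (⟨n, by omega⟩ : Fin (n+2)) (Finset.mem_univ _)
        (by
          intro x _ hx
          have hx1 : x.1 ≠ n := by
            intro h; exact hx (Fin.ext h)
          simp only [jacobiM]
          rw [if_neg (by omega), if_neg (by omega), zero_mul])]
      have hJ : jacobiM p q n ⟨n+1, hk⟩ (⟨n, by omega⟩ : Fin (n+2)) = Real.sqrt p := by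
        have f1 : ¬ (n + 1 + 1 = n) := by omega
        have f3 : n ≠ 0 := by omega
        simp [jacobiM, f1, f3]
      have hvn : vVec p q n m ⟨n, by omega⟩
          = lamEig p q n m * Ubar n m ((n:ℤ) - 1) / Real.sqrt q
            - Ubar n m ((n:ℤ) - 2) / Real.sqrt p := by
        have c1 : n ≠ 0 := by omega
        have c2 : n ≠ n + 1 := by omega
        simp only [vVec]
        rw [if_neg c1, if_neg c2]
      have hvtop : vVec p q n m ⟨n+1, hk⟩
          = Real.sqrt q *
            (lamEig p q n m * Ubar n m (n : ℤ) / Real.sqrt q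
              - Ubar n m ((n : ℤ) - 1) / Real.sqrt p) := by
        have c1 : n + 1 ≠ 0 := by omega
        simp only [vVec]
        rw [if_neg c1, if_pos trivial]
      have hrec := ubar_rec n m ((n:ℤ) - 1)
      rw [show (n:ℤ)-1+1 = (n:ℤ) from by ring, show (n:ℤ)-1-1 = (n:ℤ)-2 from by ring,
        ubar_top] at hrec
      have e : Ubar n m ((n:ℤ)-2) = 2 * Real.cos (thetaAngle n m) * Ubar n m ((n:ℤ)-1) := by
        linarith
      rw [hJ, hvn, hvtop, ubar_top, e]
      unfold lamEig
      rw [hr]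
      field_simp
      linear_combination (Real.cos (thetaAngle n m)
        * Ubar n m ((n:ℤ)-1)) * hxy
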